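/- arXiv:2006.06301 — 2 statements merged into one kernel-verified Lean document; each statement's English description precedes it below -/
import Mathlib

section
/- Let B be a commutative ring and f₁,…,f_n a regular sequence in B. Then the Koszul complex K(B, f₁,…,f_n) is a resolution of B/(f₁,…,f_n): its homology vanishes in all degrees except degree 0, where it equals B/(f₁,…,f_n). -/
set_option linter.unusedSectionVars false

open ExteriorAlgebra CliffordAlgebra

namespace KoszulProof

section General
variable {R : Type} [CommRing R] {M N : Type} [AddCommGroup M] [Module R M]
  [AddCommGroup N] [Module R N]

theorem contractLeft_map_comm (g : M →ₗ[R] N) (d : Module.Dual R N) (x : ExteriorAlgebra R M) :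
    contractLeft d (ExteriorAlgebra.map g x) =
      ExteriorAlgebra.map g (contractLeft (d.comp g) x) := by
  induction x using CliffordAlgebra.left_induction with
  | algebraMap r => simp [contractLeft_algebraMap]
  | add x y hx hy => simp [map_add, hx, hy]
  | ι_mul x m hx =>
    rw [map_mul, ExteriorAlgebra.map_apply_ι, contractLeft_ι_mul, hx,
      contractLeft_ι_mul, map_sub, map_smul, map_mul, ExteriorAlgebra.map_apply_ι]
    simp [LinearMap.comp_apply]

theorem contractLeft_iMulti (d : Module.Dual R M) : ∀ (k : ℕ) (v : Fin (k+1) → M),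
    contractLeft d (ιMulti R (k+1) v) =
      ∑ i : Fin (k+1), ((-1 : ℤ) ^ (i : ℕ)) •
        (d (v i) • ιMulti R k (fun l => v (i.succAbove l))) := by
  intro k
  induction k with
  | zero =>
    intro v
    rw [ιMulti_succ_apply, contractLeft_ι_mul]
    simp [ιMulti_zero_apply]
  | succ k ih =>
    intro v
    rw [ιMulti_succ_apply, contractLeft_ι_mul, ih (Matrix.vecTail v)]
    conv_rhs => rw [Fin.sum_univ_succ]
    rw [sub_eq_add_neg]
    congr 1
    · rw [Fin.succAbove_zero]
      simp [Matrix.vecTail, Function.comp_def]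
    · rw [Finset.mul_sum, ← Finset.sum_neg_distrib]
      refine Finset.sum_congr rfl fun j _ => ?_
      have h1 : ιMulti R (k+1) (fun l => v (Fin.succAbove j.succ l)) =
          ExteriorAlgebra.ι R (v 0) * ιMulti R k (fun l => Matrix.vecTail v (Fin.succAbove j l)) := by
        rw [ιMulti_succ_apply]
        congr 1
        · congr 1
          ext l
          simp only [Matrix.vecTail, Function.comp_apply]
          exact congrArg v (Fin.succ_succAbove_succ j l)
      rw [h1, mul_smul_comm, mul_smul_comm, Matrix.vecTail, Function.comp_apply,
        Fin.val_succ, pow_succ, mul_comm ((-1:ℤ)^(j:ℕ)), mul_smul]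
      simp

theorem mem_zeroth (x : ExteriorAlgebra R M) (hx : x ∈ ⋀[R]^0 M) :
    ∃ r : R, x = algebraMap R _ r := by
  rw [exteriorPower, pow_zero, Submodule.mem_one] at hx
  obtain ⟨r, hr⟩ := hx
  exact ⟨r, hr.symm⟩

theorem zeroth_mem (r : R) : (algebraMap R (ExteriorAlgebra R M) r) ∈ ⋀[R]^0 M := by
  rw [exteriorPower, pow_zero, Submodule.mem_one]
  exact ⟨r, rfl⟩

theorem ι_mem (m : M) : ExteriorAlgebra.ι R m ∈ ⋀[R]^1 M := by
  rw [exteriorPower, pow_one]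
  exact LinearMap.mem_range_self _ m

theorem ι_mul_mem {k : ℕ} (m : M) {x : ExteriorAlgebra R M} (hx : x ∈ ⋀[R]^k M) :
    ExteriorAlgebra.ι R m * x ∈ ⋀[R]^(k+1) M := by
  rw [exteriorPower, pow_succ']
  exact Submodule.mul_mem_mul (LinearMap.mem_range_self _ m) hx

theorem ιMulti_mem {k : ℕ} (v : Fin k → M) : ιMulti R k v ∈ ⋀[R]^k M :=
  ιMulti_range R k (Set.mem_range_self v)

theorem map_power_mem (g : M →ₗ[R] N) {k : ℕ} {x : ExteriorAlgebra R M}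
    (hx : x ∈ ⋀[R]^k M) : ExteriorAlgebra.map g x ∈ ⋀[R]^k N := by
  rw [← ιMulti_span_fixedDegree] at hx
  induction hx using Submodule.span_induction with
  | mem z hz => obtain ⟨v, rfl⟩ := hz; rw [map_apply_ιMulti]; exact ιMulti_mem _
  | zero => simp
  | add a b _ _ ha hb => rw [map_add]; exact Submodule.add_mem _ ha hb
  | smul r a _ ha => rw [map_smul]; exact Submodule.smul_mem _ r ha

theorem contractLeft_power_mem (d : Module.Dual R M) {k : ℕ} {x : ExteriorAlgebra R M}
    (hx : x ∈ ⋀[R]^(k+1) M) : contractLeft d x ∈ ⋀[R]^k M := by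
  rw [← ιMulti_span_fixedDegree] at hx
  induction hx using Submodule.span_induction with
  | mem z hz =>
    obtain ⟨v, rfl⟩ := hz
    rw [contractLeft_iMulti]
    refine Submodule.sum_mem _ fun i _ => ?_
    exact Submodule.smul_of_tower_mem _ _ (Submodule.smul_mem _ _ (ιMulti_mem _))
  | zero => simp
  | add a b _ _ ha hb => rw [map_add]; exact Submodule.add_mem _ ha hb
  | smul r a _ ha => rw [map_smul]; exact Submodule.smul_mem _ r ha

theorem contractLeft_zeroth (d : Module.Dual R M) {x : ExteriorAlgebra R M}
    (hx : x ∈ ⋀[R]^0 M) : contractLeft d x = 0 := by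
  obtain ⟨r, rfl⟩ := mem_zeroth x hx
  exact contractLeft_algebraMap _ _ _

theorem ι_anticomm (x y : M) :
    ExteriorAlgebra.ι R x * ExteriorAlgebra.ι R y
      = -(ExteriorAlgebra.ι R y * ExteriorAlgebra.ι R x) := by
  rw [eq_neg_iff_add_eq_zero]
  exact ι_add_mul_swap x y

end General

section Koszul
variable {B : Type} [CommRing B]

/-- The functional x ↦ ∑ f j * x j. -/
def phiF {n : ℕ} (f : Fin n → B) : Module.Dual B (Fin n → B) :=
  ∑ j, f j • LinearMap.proj j

theorem phiF_apply {n : ℕ} (f : Fin n → B) (x : Fin n → B) :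
    phiF f x = ∑ j, f j * x j := by
  simp [phiF]

/-- extend a vector by zero in the last coordinate -/
def inclL (n : ℕ) : (Fin n → B) →ₗ[B] (Fin (n+1) → B) :=
  LinearMap.pi (fun i => Fin.lastCases 0 (fun j => LinearMap.proj j) i)

def eLast (n : ℕ) : Fin (n+1) → B := Pi.single (Fin.last n) 1

theorem inclL_castSucc {n : ℕ} (x : Fin n → B) (j : Fin n) :
    inclL n x (Fin.castSucc j) = x j := by
  simp [inclL, LinearMap.pi_apply]

theorem inclL_last {n : ℕ} (x : Fin n → B) : inclL n x (Fin.last n) = 0 := by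
  simp [inclL, LinearMap.pi_apply]

theorem phiF_comp_inclL {n : ℕ} (f : Fin (n+1) → B) :
    (phiF f).comp (inclL n) = phiF (f ∘ Fin.castSucc) := by
  refine LinearMap.ext fun x => ?_
  rw [LinearMap.comp_apply, phiF_apply, phiF_apply, Fin.sum_univ_castSucc]
  simp [inclL_castSucc, inclL_last]

theorem projLast_comp_inclL {n : ℕ} :
    (LinearMap.proj (Fin.last n) : (Fin (n+1) → B) →ₗ[B] B).comp (inclL n) = 0 := by
  refine LinearMap.ext fun x => ?_
  simp only [LinearMap.comp_apply, LinearMap.proj_apply, LinearMap.zero_apply]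
  exact inclL_last x

theorem funLeft_comp_inclL {n : ℕ} :
    (LinearMap.funLeft B B Fin.castSucc).comp (inclL n) = LinearMap.id := by
  ext x j
  simp [LinearMap.funLeft, inclL_castSucc]

theorem phiF_eLast {n : ℕ} (f : Fin (n+1) → B) : phiF f (eLast n) = f (Fin.last n) := by
  simp [phiF_apply, eLast, Pi.single_apply]

theorem decompose_vec {n : ℕ} (x : Fin (n+1) → B) :
    x = inclL n (LinearMap.funLeft B B Fin.castSucc x) + x (Fin.last n) • eLast n := by
  ext i
  induction i using Fin.lastCases with
  | last => simp [inclL_last, eLast]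
  | cast j => simp [inclL_castSucc, LinearMap.funLeft, eLast,
      Pi.single_eq_of_ne (Fin.castSucc_lt_last j).ne]

theorem eL_mul_algebraMap {n : ℕ} (c : B) :
    ExteriorAlgebra.ι B (eLast n) * algebraMap B (ExteriorAlgebra B (Fin (n+1) → B)) c =
      c • ExteriorAlgebra.ι B (eLast n) := by
  rw [← Algebra.commutes, ← Algebra.smul_def]

/-- decomposition of generators -/
theorem decomp_gen {n : ℕ} : ∀ (k : ℕ) (v : Fin (k+1) → (Fin (n+1) → B)),
    ∃ a b, a ∈ ⋀[B]^(k+1) (Fin n → B) ∧ b ∈ ⋀[B]^k (Fin n → B) ∧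
      ιMulti B (k+1) v = ExteriorAlgebra.map (inclL n) a +
        ExteriorAlgebra.ι B (eLast n) * ExteriorAlgebra.map (inclL n) b := by
  intro k
  induction k with
  | zero =>
    intro v
    refine ⟨ExteriorAlgebra.ι B (LinearMap.funLeft B B Fin.castSucc (v 0)),
      algebraMap B _ (v 0 (Fin.last n)), ι_mem _, zeroth_mem _, ?_⟩
    rw [ιMulti_succ_apply, ιMulti_zero_apply, mul_one, ExteriorAlgebra.map_apply_ι,
      AlgHom.commutes, eL_mul_algebraMap]
    conv_lhs => rw [decompose_vec (v 0)]
    rw [map_add, map_smul]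
  | succ k ih =>
    intro v
    obtain ⟨a, b, ha, hb, hab⟩ := ih (Matrix.vecTail v)
    set w := LinearMap.funLeft B B Fin.castSucc (v 0) with hw
    set c := v 0 (Fin.last n) with hc
    refine ⟨ExteriorAlgebra.ι B w * a, c • a - ExteriorAlgebra.ι B w * b,
      ι_mul_mem _ ha, Submodule.sub_mem _ (Submodule.smul_mem _ _ ha) (ι_mul_mem _ hb), ?_⟩
    rw [ιMulti_succ_apply, hab]
    conv_lhs => rw [decompose_vec (v 0)]
    rw [map_add, map_smul]
    set F : ExteriorAlgebra B (Fin n → B) →ₐ[B] ExteriorAlgebra B (Fin (n+1) → B) :=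
      ExteriorAlgebra.map (inclL n) with hF
    set eL : ExteriorAlgebra B (Fin (n+1) → B) := ExteriorAlgebra.ι B (eLast (B := B) n) with heL
    have hFιw : (ExteriorAlgebra.ι B (inclL n w) : ExteriorAlgebra B (Fin (n+1) → B))
        = F (ExteriorAlgebra.ι B w) := by
      rw [hF, ExteriorAlgebra.map_apply_ι]
    rw [hFιw]
    have h4 : eL * (eL * F b) = 0 := by
      rw [← mul_assoc, heL, ι_sq_zero, zero_mul]
    have h2 : F (ExteriorAlgebra.ι B w) * (eL * F b)
        = -(eL * (F (ExteriorAlgebra.ι B w) * F b)) := by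
      rw [← mul_assoc, ← hFιw, heL, ι_anticomm, neg_mul, mul_assoc, hFιw]
    rw [add_mul, mul_add, mul_add, smul_mul_assoc, smul_mul_assoc, h4, smul_zero, add_zero,
      h2, ← map_mul, ← map_mul, map_sub, map_smul, mul_sub]
    rw [mul_smul_comm]
    abel

theorem decomp {n k : ℕ} {x : ExteriorAlgebra B (Fin (n+1) → B)}
    (hx : x ∈ ⋀[B]^(k+1) (Fin (n+1) → B)) :
    ∃ a b, a ∈ ⋀[B]^(k+1) (Fin n → B) ∧ b ∈ ⋀[B]^k (Fin n → B) ∧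
      x = ExteriorAlgebra.map (inclL n) a +
        ExteriorAlgebra.ι B (eLast n) * ExteriorAlgebra.map (inclL n) b := by
  rw [← ιMulti_span_fixedDegree] at hx
  induction hx using Submodule.span_induction with
  | mem z hz => obtain ⟨v, rfl⟩ := hz; exact decomp_gen k v
  | zero => exact ⟨0, 0, Submodule.zero_mem _, Submodule.zero_mem _, by simp⟩
  | add x y _ _ hx hy =>
    obtain ⟨a, b, ha, hb, rfl⟩ := hx
    obtain ⟨a', b', ha', hb', rfl⟩ := hy
    refine ⟨a + a', b + b', Submodule.add_mem _ ha ha', Submodule.add_mem _ hb hb', ?_⟩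
    rw [map_add, map_add, mul_add]
    abel
  | smul r x _ hx =>
    obtain ⟨a, b, ha, hb, rfl⟩ := hx
    refine ⟨r • a, r • b, Submodule.smul_mem _ _ ha, Submodule.smul_mem _ _ hb, ?_⟩
    rw [map_smul, map_smul, smul_add, mul_smul_comm]

theorem F_inj {n : ℕ} : Function.Injective (ExteriorAlgebra.map (inclL n) :
    ExteriorAlgebra B (Fin n → B) → ExteriorAlgebra B (Fin (n+1) → B)) :=
  ExteriorAlgebra.map_injective ⟨LinearMap.funLeft B B Fin.castSucc, funLeft_comp_inclL⟩

theorem cL_F {n : ℕ} (x : ExteriorAlgebra B (Fin n → B)) :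
    contractLeft (LinearMap.proj (Fin.last n) : (Fin (n+1) → B) →ₗ[B] B)
      (ExteriorAlgebra.map (inclL n) x) = 0 := by
  rw [contractLeft_map_comm, projLast_comp_inclL, map_zero, LinearMap.zero_apply, map_zero]

theorem cL_eL_mul {n : ℕ} (y : ExteriorAlgebra B (Fin (n+1) → B)) :
    contractLeft (LinearMap.proj (Fin.last n) : (Fin (n+1) → B) →ₗ[B] B)
        (ExteriorAlgebra.ι B (eLast n) * y) =
      y - ExteriorAlgebra.ι B (eLast n) *
        contractLeft (LinearMap.proj (Fin.last n) : (Fin (n+1) → B) →ₗ[B] B) y := by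
  rw [contractLeft_ι_mul]
  have : (LinearMap.proj (Fin.last n) : (Fin (n+1) → B) →ₗ[B] B) (eLast n) = 1 := by
    simp [eLast]
  rw [this, one_smul]

theorem extract_zero {n : ℕ} {p q : ExteriorAlgebra B (Fin n → B)}
    (h : ExteriorAlgebra.map (inclL n) p +
      ExteriorAlgebra.ι B (eLast n) * ExteriorAlgebra.map (inclL n) q = 0) :
    p = 0 ∧ q = 0 := by
  have h2 := congrArg (contractLeft
    (LinearMap.proj (Fin.last n) : (Fin (n+1) → B) →ₗ[B] B)) h
  rw [map_add, map_zero, cL_F, zero_add, cL_eL_mul, cL_F, mul_zero, sub_zero] at h2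
  have hq : q = 0 := F_inj (by rw [h2, map_zero])
  subst hq
  rw [map_zero, mul_zero, add_zero] at h
  exact ⟨F_inj (by rw [h, map_zero]), rfl⟩

theorem Dc_F {n : ℕ} (f : Fin (n+1) → B) (x : ExteriorAlgebra B (Fin n → B)) :
    contractLeft (phiF f) (ExteriorAlgebra.map (inclL n) x) =
      ExteriorAlgebra.map (inclL n) (contractLeft (phiF (f ∘ Fin.castSucc)) x) := by
  rw [contractLeft_map_comm, phiF_comp_inclL]

theorem Dc_eL_mul {n : ℕ} (f : Fin (n+1) → B) (y : ExteriorAlgebra B (Fin (n+1) → B)) :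
    contractLeft (phiF f) (ExteriorAlgebra.ι B (eLast n) * y) =
      f (Fin.last n) • y - ExteriorAlgebra.ι B (eLast n) * contractLeft (phiF f) y := by
  rw [contractLeft_ι_mul, phiF_eLast]

/-- The inductive statement: the Koszul complex is exact in positive degrees and its zeroth
homology is `B ⧸ (f)`. -/
def Good (n : ℕ) (f : Fin n → B) : Prop :=
  (∀ (k : ℕ) ⦃x : ExteriorAlgebra B (Fin n → B)⦄, x ∈ ⋀[B]^(k+1) (Fin n → B) →
      contractLeft (phiF f) x = 0 →
      ∃ y ∈ ⋀[B]^(k+2) (Fin n → B), contractLeft (phiF f) y = x) ∧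
  (∀ b : B, (∃ y ∈ ⋀[B]^1 (Fin n → B),
      contractLeft (phiF f) y = algebraMap B _ b) ↔ b ∈ Ideal.span (Set.range f))

theorem power_zero_ring {k : ℕ} {x : ExteriorAlgebra B (Fin 0 → B)}
    (hx : x ∈ ⋀[B]^(k+1) (Fin 0 → B)) : x = 0 := by
  rw [← ιMulti_span_fixedDegree] at hx
  induction hx using Submodule.span_induction with
  | mem z hz =>
    obtain ⟨v, rfl⟩ := hz
    have hv : v 0 = 0 := funext fun j => j.elim0
    exact (ιMulti B (k+1)).map_coord_zero 0 hv
  | zero => rfl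
  | add a b _ _ ha hb => rw [ha, hb, add_zero]
  | smul r a _ ha => rw [ha, smul_zero]

theorem good_zero (f : Fin 0 → B) : Good 0 f := by
  constructor
  · intro k x hx _
    refine ⟨0, Submodule.zero_mem _, ?_⟩
    rw [map_zero, power_zero_ring hx]
  · intro b
    have hrange : Set.range f = ∅ := by
      simp [Set.range_eq_empty]
    rw [hrange, Ideal.span_empty]
    constructor
    · rintro ⟨y, hy, hDy⟩
      rw [power_zero_ring hy, map_zero] at hDy
      have : b = 0 := (algebraMap_leftInverse (Fin 0 → B)).injective (by rw [← hDy]; simp)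
      simp [this]
    · intro hb
      refine ⟨0, Submodule.zero_mem _, ?_⟩
      rw [map_zero]
      rw [Submodule.mem_bot] at hb
      rw [hb, map_zero]

set_option maxHeartbeats 1000000 in
theorem good_succ {n : ℕ} (f : Fin (n+1) → B) (ih : Good n (f ∘ Fin.castSucc))
    (hreg : ∀ β : B, f (Fin.last n) * β ∈ Ideal.span (Set.range (f ∘ Fin.castSucc)) →
      β ∈ Ideal.span (Set.range (f ∘ Fin.castSucc))) :
    Good (n+1) f := by
  obtain ⟨ih1, ih2⟩ := ih
  constructor
  · intro k x hx hDx
    obtain ⟨a, b, ha, hb, rfl⟩ := decomp hx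
    rw [map_add, Dc_F, Dc_eL_mul, Dc_F] at hDx
    have hDx' : ExteriorAlgebra.map (inclL n) (contractLeft (phiF (f ∘ Fin.castSucc)) a
          + f (Fin.last n) • b) +
        ExteriorAlgebra.ι B (eLast n) * ExteriorAlgebra.map (inclL n)
          (-(contractLeft (phiF (f ∘ Fin.castSucc)) b)) = 0 := by
      rw [map_add, map_smul, map_neg, mul_neg, ← hDx]
      abel
    obtain ⟨h1, h2⟩ := extract_zero hDx'
    rw [neg_eq_zero] at h2
    have hBb : ∃ Bb ∈ ⋀[B]^(k+1) (Fin n → B),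
        contractLeft (phiF (f ∘ Fin.castSucc)) Bb = -b := by
      cases k with
      | zero =>
        obtain ⟨β, rfl⟩ := mem_zeroth b hb
        have hsm : f (Fin.last n) • (algebraMap B (ExteriorAlgebra B (Fin n → B)) β)
            = algebraMap B _ (f (Fin.last n) * β) := by
          rw [Algebra.smul_def, ← map_mul]
        have hma : contractLeft (phiF (f ∘ Fin.castSucc)) a
            = algebraMap B _ (-(f (Fin.last n) * β)) := by
          have h1' := eq_neg_of_add_eq_zero_left h1
          rw [h1', hsm]
          exact (map_neg _ _).symm
        have hmem : -(f (Fin.last n) * β) ∈ Ideal.span (Set.range (f ∘ Fin.castSucc)) :=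
          (ih2 _).mp ⟨a, ha, hma⟩
        have hmem2 : f (Fin.last n) * β ∈ Ideal.span (Set.range (f ∘ Fin.castSucc)) := by
          simpa using Submodule.neg_mem _ hmem
        obtain ⟨t, ht, hDt⟩ := (ih2 β).mpr (hreg β hmem2)
        exact ⟨-t, Submodule.neg_mem _ ht, by rw [map_neg, hDt]⟩
      | succ j =>
        obtain ⟨t, ht, hDt⟩ := ih1 j hb h2
        exact ⟨-t, Submodule.neg_mem _ ht, by rw [map_neg, hDt]⟩
    obtain ⟨Bb, hBbm, hDBb⟩ := hBb
    have ha2 : a - f (Fin.last n) • Bb ∈ ⋀[B]^(k+1) (Fin n → B) :=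
      Submodule.sub_mem _ ha (Submodule.smul_mem _ _ hBbm)
    have hDa2 : contractLeft (phiF (f ∘ Fin.castSucc)) (a - f (Fin.last n) • Bb) = 0 := by
      rw [map_sub, map_smul, hDBb, smul_neg, sub_neg_eq_add]
      exact h1
    obtain ⟨A, hA, hDA⟩ := ih1 k ha2 hDa2
    refine ⟨ExteriorAlgebra.map (inclL n) A +
      ExteriorAlgebra.ι B (eLast n) * ExteriorAlgebra.map (inclL n) Bb,
      Submodule.add_mem _ (map_power_mem _ hA) (ι_mul_mem _ (map_power_mem _ hBbm)), ?_⟩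
    rw [map_add, Dc_F, Dc_eL_mul, Dc_F, hDA, hDBb, map_sub, map_smul, map_neg, mul_neg,
      sub_neg_eq_add]
    abel
  · intro b
    constructor
    · rintro ⟨y, hy, hDy⟩
      obtain ⟨a, bb, ha, hbb, rfl⟩ := decomp hy
      obtain ⟨β, rfl⟩ := mem_zeroth bb hbb
      rw [map_add, Dc_F, Dc_eL_mul, Dc_F, contractLeft_algebraMap, map_zero, mul_zero,
        sub_zero] at hDy
      obtain ⟨γ, hγ⟩ := mem_zeroth _ (contractLeft_power_mem (phiF (f ∘ Fin.castSucc)) ha)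
      rw [hγ, AlgHom.commutes, AlgHom.commutes, Algebra.smul_def, ← map_mul, ← map_add] at hDy
      have hbval : γ + f (Fin.last n) * β = b :=
        (algebraMap_leftInverse (Fin (n+1) → B)).injective hDy
      have hγmem : γ ∈ Ideal.span (Set.range f) :=
        Ideal.span_mono (Set.range_comp_subset_range _ _) ((ih2 γ).mp ⟨a, ha, hγ⟩)
      have hfl : f (Fin.last n) * β ∈ Ideal.span (Set.range f) :=
        Ideal.mul_mem_right β _ (Ideal.subset_span ⟨Fin.last n, rfl⟩)
      rw [← hbval]
      exact Submodule.add_mem _ hγmem hfl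
    · intro hb
      have hsplit : Set.range f = Set.range (f ∘ Fin.castSucc) ∪ {f (Fin.last n)} := by
        ext z
        constructor
        · rintro ⟨i, rfl⟩
          induction i using Fin.lastCases with
          | last => exact Or.inr rfl
          | cast j => exact Or.inl ⟨j, rfl⟩
        · rintro (⟨j, rfl⟩ | rfl)
          · exact ⟨Fin.castSucc j, rfl⟩
          · exact ⟨Fin.last n, rfl⟩
      rw [hsplit, Ideal.span_union] at hb
      obtain ⟨c₀, hc₀, d₀, hd₀, rfl⟩ := Submodule.mem_sup.mp hb
      obtain ⟨β, rfl⟩ := Ideal.mem_span_singleton'.mp hd₀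
      obtain ⟨u, hu, hDu⟩ := (ih2 c₀).mpr hc₀
      refine ⟨ExteriorAlgebra.map (inclL n) u + ExteriorAlgebra.ι B (eLast n) *
        ExteriorAlgebra.map (inclL n) (algebraMap B _ β), ?_, ?_⟩
      · refine Submodule.add_mem _ (map_power_mem _ hu) ?_
        rw [AlgHom.commutes, eL_mul_algebraMap]
        exact Submodule.smul_mem _ _ (ι_mem _)
      · rw [map_add, Dc_F, hDu, Dc_eL_mul, Dc_F, contractLeft_algebraMap, map_zero, mul_zero,
          sub_zero, AlgHom.commutes, AlgHom.commutes, Algebra.smul_def, ← map_mul, ← map_add,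
          mul_comm (f (Fin.last n)) β]

theorem htake {n : ℕ} (f : Fin (n+1) → B) :
    (List.ofFn f).take n = List.ofFn (f ∘ Fin.castSucc) := by
  rw [List.ofFn_succ' f, List.concat_eq_append,
    List.take_append_of_le_length (by simp), List.take_of_length_le (by simp)]
  rfl

theorem good_of_weaklyRegular : ∀ {n : ℕ} (f : Fin n → B),
    RingTheory.Sequence.IsWeaklyRegular B (List.ofFn f) → Good n f := by
  intro n
  induction n with
  | zero => intro f _; exact good_zero f
  | succ n ih =>
    intro f h
    have hpre : RingTheory.Sequence.IsWeaklyRegular B (List.ofFn (f ∘ Fin.castSucc)) := by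
      rw [RingTheory.Sequence.isWeaklyRegular_iff]
      intro i hi
      rw [List.length_ofFn] at hi
      have hi' : i < (List.ofFn f).length := by rw [List.length_ofFn]; omega
      have h2 := h.regular_mod_prev i hi'
      have e1 : (List.ofFn (f ∘ Fin.castSucc)).take i = (List.ofFn f).take i := by
        rw [← htake f, List.take_take, min_eq_left (le_of_lt hi)]
      have e2 : (List.ofFn (f ∘ Fin.castSucc))[i]'(by rw [List.length_ofFn]; omega)
          = (List.ofFn f)[i]'hi' := by
        rw [List.getElem_ofFn, List.getElem_ofFn]
        exact congrArg f (Fin.ext rfl)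
      rw [e1, e2]
      exact h2
    have hIeq : (Ideal.ofList ((List.ofFn f).take n) • ⊤ : Submodule B B)
        = Ideal.span (Set.range (f ∘ Fin.castSucc)) := by
      rw [htake f, smul_eq_mul, Ideal.mul_top]
      have hset : {r : B | r ∈ List.ofFn (f ∘ Fin.castSucc)} = Set.range (f ∘ Fin.castSucc) :=
        Set.ext fun z => by rw [Set.mem_setOf_eq, List.mem_ofFn, Set.mem_range]
      show Ideal.span {r : B | r ∈ List.ofFn (f ∘ Fin.castSucc)} = _
      rw [hset]
    have hn' : n < (List.ofFn f).length := by simp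
    have h3 := h.regular_mod_prev n hn'
    rw [hIeq] at h3
    have e3 : (List.ofFn f)[n]'hn' = f (Fin.last n) := by
      rw [List.getElem_ofFn]
      exact congrArg f (Fin.ext rfl)
    rw [e3] at h3
    refine good_succ f (ih _ hpre) ?_
    intro β hβ
    have hq : f (Fin.last n) • (Submodule.Quotient.mk β :
          B ⧸ (Ideal.span (Set.range (f ∘ Fin.castSucc)) : Submodule B B))
        = f (Fin.last n) • (0 : B ⧸ (Ideal.span (Set.range (f ∘ Fin.castSucc)) : Submodule B B)) := by
      rw [smul_zero, ← Submodule.Quotient.mk_smul, smul_eq_mul]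
      exact (Submodule.Quotient.mk_eq_zero _).mpr hβ
    have hβ0 := h3 hq
    rw [smul_zero] at hq
    have : (Submodule.Quotient.mk β :
        B ⧸ (Ideal.span (Set.range (f ∘ Fin.castSucc)) : Submodule B B)) = 0 := hβ0
    exact (Submodule.Quotient.mk_eq_zero _).mp this

end Koszul

end KoszulProof


open KoszulProof CliffordAlgebra ExteriorAlgebra


/-- Koszul resolution: if `f₁,…,f_n` is a regular sequence in `B`, the Koszul complex
`K(B, f)` — with terms `Λ^k(Bⁿ)` and differential
`D(v₁∧⋯∧v_{k+1}) = Σ_i (-1)^{1+i} φ(vᵢ)·v₁∧⋯∧v̂ᵢ∧⋯∧v_{k+1}` where `φ(b) = Σ fᵢbᵢ` —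
is a resolution of `B/(f₁,…,f_n)`: its homology vanishes in all degrees except degree `0`,
where it equals `B/(f₁,…,f_n)`. -/
theorem stmt_12 (B : Type) [CommRing B] (n : ℕ) (f : Fin n → B)
    (hreg : RingTheory.Sequence.IsRegular B (List.ofFn f))
    (D : ∀ k : ℕ, (⋀[B]^(k+1) (Fin n → B)) →ₗ[B] (⋀[B]^k (Fin n → B)))
    (hD : ∀ (k : ℕ) (v : Fin (k+1) → (Fin n → B)),
      ((D k ⟨ExteriorAlgebra.ιMulti B (k+1) v,
          ExteriorAlgebra.ιMulti_range B (k+1) (Set.mem_range_self v)⟩ :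
        ⋀[B]^k (Fin n → B)) : ExteriorAlgebra B (Fin n → B)) =
        ∑ i : Fin (k+1), ((-1 : ℤ) ^ (i : ℕ)) •
          ((∑ j : Fin n, f j * v i j) •
            ExteriorAlgebra.ιMulti B k (fun l => v (i.succAbove l)))) :
    (∀ k : ℕ, LinearMap.ker (D k) = LinearMap.range (D (k+1))) ∧
      Nonempty (((⋀[B]^0 (Fin n → B)) ⧸ LinearMap.range (D 0)) ≃ₗ[B]
        (B ⧸ Ideal.span (Set.range f))) := by
  have good := good_of_weaklyRegular f hreg.toIsWeaklyRegular
  have hDeq : ∀ (k : ℕ) (x : ExteriorAlgebra B (Fin n → B))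
      (hx : x ∈ ⋀[B]^(k+1) (Fin n → B)),
      ((D k ⟨x, hx⟩ : ⋀[B]^k (Fin n → B)) : ExteriorAlgebra B (Fin n → B))
        = contractLeft (phiF f) x := by
    intro k
    have main : ∀ x ∈ Submodule.span B
        (Set.range (ExteriorAlgebra.ιMulti B (k+1) (M := Fin n → B))),
        ∀ (hx : x ∈ ⋀[B]^(k+1) (Fin n → B)),
        ((D k ⟨x, hx⟩ : ⋀[B]^k (Fin n → B)) : ExteriorAlgebra B (Fin n → B))
          = contractLeft (phiF f) x := by
      intro x hx
      induction hx using Submodule.span_induction with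
      | mem z hz =>
        obtain ⟨v, rfl⟩ := hz
        intro hmem
        have heq : (⟨ExteriorAlgebra.ιMulti B (k+1) v, hmem⟩ : ⋀[B]^(k+1) (Fin n → B))
            = ⟨ExteriorAlgebra.ιMulti B (k+1) v,
                ExteriorAlgebra.ιMulti_range B (k+1) (Set.mem_range_self v)⟩ := rfl
        rw [heq, hD k v, contractLeft_iMulti]
        refine Finset.sum_congr rfl fun i _ => ?_
        rw [phiF_apply]
      | zero =>
        intro hmem
        have heq : (⟨0, hmem⟩ : ⋀[B]^(k+1) (Fin n → B)) = 0 := rfl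
        rw [heq, map_zero, map_zero, Submodule.coe_zero]
      | add x y hxs hys hx hy =>
        intro hmem
        have hxm : x ∈ ⋀[B]^(k+1) (Fin n → B) := by
          rw [← ιMulti_span_fixedDegree]; exact hxs
        have hym : y ∈ ⋀[B]^(k+1) (Fin n → B) := by
          rw [← ιMulti_span_fixedDegree]; exact hys
        have heq : (⟨x + y, hmem⟩ : ⋀[B]^(k+1) (Fin n → B)) = ⟨x, hxm⟩ + ⟨y, hym⟩ := rfl
        rw [heq, map_add, Submodule.coe_add, hx hxm, hy hym, map_add]
      | smul r x hxs hx =>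
        intro hmem
        have hxm : x ∈ ⋀[B]^(k+1) (Fin n → B) := by
          rw [← ιMulti_span_fixedDegree]; exact hxs
        have heq : (⟨r • x, hmem⟩ : ⋀[B]^(k+1) (Fin n → B)) = r • ⟨x, hxm⟩ := rfl
        rw [heq, map_smul, Submodule.coe_smul, hx hxm, map_smul]
    intro x hx
    exact main x (by rw [ιMulti_span_fixedDegree]; exact hx) hx
  have part1 : ∀ k : ℕ, LinearMap.ker (D k) = LinearMap.range (D (k+1)) := by
    intro k
    ext z
    obtain ⟨x, hx⟩ := z
    rw [LinearMap.mem_ker, LinearMap.mem_range]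
    constructor
    · intro hker
      have hDcx : contractLeft (phiF f) x = 0 := by
        rw [← hDeq k x hx, hker, Submodule.coe_zero]
      obtain ⟨y, hy, hDy⟩ := good.1 k hx hDcx
      refine ⟨⟨y, hy⟩, ?_⟩
      apply Subtype.ext
      rw [hDeq (k+1) y hy, hDy]
    · rintro ⟨⟨y, hy⟩, hyx⟩
      rw [← hyx]
      apply Subtype.ext
      rw [Submodule.coe_zero]
      have h1 := hDeq k _ (D (k+1) ⟨y, hy⟩).2
      rw [show (⟨((D (k+1) ⟨y, hy⟩ : ⋀[B]^(k+1) (Fin n → B)) :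
            ExteriorAlgebra B (Fin n → B)), (D (k+1) ⟨y, hy⟩).2⟩ :
          ⋀[B]^(k+1) (Fin n → B)) = D (k+1) ⟨y, hy⟩ from rfl] at h1
      rw [h1, hDeq (k+1) y hy, contractLeft_contractLeft]
  refine ⟨part1, ?_⟩
  have einj : Function.Injective (algebraMap B (ExteriorAlgebra B (Fin n → B))) :=
    (ExteriorAlgebra.algebraMap_leftInverse (Fin n → B)).injective
  let eL0 : B →ₗ[B] (⋀[B]^0 (Fin n → B)) :=
    (Algebra.linearMap B (ExteriorAlgebra B (Fin n → B))).codRestrict _ (fun b => zeroth_mem b)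
  have hbij : Function.Bijective eL0 := by
    constructor
    · intro a b hab
      exact einj (congrArg Subtype.val hab)
    · rintro ⟨z, hz⟩
      obtain ⟨r, rfl⟩ := mem_zeroth z hz
      exact ⟨r, rfl⟩
  let e : B ≃ₗ[B] (⋀[B]^0 (Fin n → B)) := LinearEquiv.ofBijective eL0 hbij
  refine ⟨Submodule.Quotient.equiv (LinearMap.range (D 0))
    (Ideal.span (Set.range f) : Submodule B B) e.symm ?_⟩
  · ext b
    simp only [Submodule.mem_map, LinearMap.mem_range]
    constructor
    · rintro ⟨z, ⟨⟨y, hy⟩, hDy⟩, hzb⟩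
      have hz : z = e b := by rw [← hzb]; exact (LinearEquiv.apply_symm_apply e z).symm
      rw [hz] at hDy
      refine (good.2 b).mp ⟨y, hy, ?_⟩
      have h2 := hDeq 0 y hy
      rw [hDy] at h2
      exact h2.symm
    · intro hb
      obtain ⟨y, hy, hDy⟩ := (good.2 b).mpr hb
      refine ⟨e b, ⟨⟨y, hy⟩, ?_⟩, e.symm_apply_apply b⟩
      apply Subtype.ext
      rw [hDeq 0 y hy, hDy]
      rfl
end

section
/- Let B be a commutative ring, f ∈ B, and K(B,f) = B[ε] the Koszul dg algebra with dε = f, ε² = 0, ε in degree -1. For any strictly bounded complex (E, d) of B-modules with a degree -1 map h satisfying h² = 0 and dh + hd = f·id, the 'folding' (⊕_{i∈ℤ} E_{2i-1}, ⊕_{i∈ℤ} E_{2i}, d+h, d+h) is a matrix factorization of (B, f): the composites (d+h)∘(d+h) in both directions equal f·id. -/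
open DirectSum

/-- Transport of a graded component along an equality of indices. -/
def lcast {B : Type} [CommRing B] (E : ℤ → Type) [∀ i, AddCommGroup (E i)]
    [∀ i, Module B (E i)] {a b : ℤ} (hab : a = b) : E a ≃ₗ[B] E b :=
  hab ▸ LinearEquiv.refl B (E a)


section Aux
variable {B : Type} [CommRing B] (E : ℤ → Type) [∀ i, AddCommGroup (E i)]
    [∀ i, Module B (E i)]

lemma lcast_rfl {a : ℤ} (hab : a = a) (x : E a) : lcast (B := B) E hab x = x := rfl

lemma lcast_lcast {a b c : ℤ} (h1 : a = b) (h2 : b = c) (x : E a) :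
    lcast (B := B) E h2 (lcast (B := B) E h1 x) = lcast (B := B) E (h1.trans h2) x := by
  subst h1 h2; rfl

lemma d_congr (d : ∀ i : ℤ, E i →ₗ[B] E (i + 1)) {a b : ℤ} (hab : a = b)
    (h1 : b = a) (h2 : a + 1 = b + 1) (x : E b) :
    d b x = lcast (B := B) E h2 (d a (lcast (B := B) E h1 x)) := by subst hab; rfl

lemma h_congr (h : ∀ i : ℤ, E (i + 1) →ₗ[B] E i) {a b : ℤ} (hab : a = b)
    (h1 : b + 1 = a + 1) (h2 : a = b) (x : E (b + 1)) :
    h b x = lcast (B := B) E h2 (h a (lcast (B := B) E h1 x)) := by subst hab; rfl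

lemma dd_zero (d : ∀ i : ℤ, E i →ₗ[B] E (i + 1)) (hd : ∀ i, d (i + 1) ∘ₗ d i = 0)
    {a b : ℤ} (pf : a + 1 = b) (x : E a) :
    d b (lcast (B := B) E pf (d a x)) = 0 := by
  subst pf; simpa [lcast_rfl] using LinearMap.congr_fun (hd a) x

lemma quad_zero (h : ∀ i : ℤ, E (i + 1) →ₗ[B] E i) (hh : ∀ i, h i ∘ₗ h (i + 1) = 0)
    {a b : ℤ} (pf : a = b + 1) (x : E (a + 1)) :
    h b (lcast (B := B) E pf (h a x)) = 0 := by
  subst pf; simpa [lcast_rfl] using LinearMap.congr_fun (hh b) x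

lemma lof_congr_odd {j k : ℤ} (hjk : j = k) (pf : 2 * j - 1 = 2 * k - 1) (x : E (2 * j - 1)) :
    DirectSum.lof B ℤ (fun j => E (2 * j - 1)) j x
      = DirectSum.lof B ℤ (fun j => E (2 * j - 1)) k (lcast (B := B) E pf x) := by
  subst hjk; rfl

lemma lof_congr_even {j k : ℤ} (hjk : j = k) (pf : 2 * j = 2 * k) (x : E (2 * j)) :
    DirectSum.lof B ℤ (fun j => E (2 * j)) j x
      = DirectSum.lof B ℤ (fun j => E (2 * j)) k (lcast (B := B) E pf x) := by
  subst hjk; rfl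

end Aux

/-- Let `(E, d)` be a strictly bounded complex of `B`-modules equipped with a degree `-1`
map `h` satisfying `h² = 0` and `dh + hd = f·id` (a `K(B, f)`-dg module, where `d` and `h`
are recorded by their components `d i : Eⁱ → E^(i+1)` and `h i : E^(i+1) → Eⁱ`).  Then the
folding `(⊕_{i} E^(2i-1), ⊕_{i} E^(2i), d + h, d + h)` is a matrix factorization of
`(B, f)`: the composites `(d+h)∘(d+h)` in both directions equal `f·id`. -/
theorem stmt_17 (B : Type) [CommRing B] (f : B)
    (E : ℤ → Type) [∀ i, AddCommGroup (E i)] [∀ i, Module B (E i)]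
    (hbdd : ∃ N : ℤ, ∀ i : ℤ, N < |i| → Subsingleton (E i))
    (d : ∀ i : ℤ, E i →ₗ[B] E (i + 1))
    (h : ∀ i : ℤ, E (i + 1) →ₗ[B] E i)
    (hd : ∀ i, d (i + 1) ∘ₗ d i = 0)
    (hh : ∀ i, h i ∘ₗ h (i + 1) = 0)
    (hdh : ∀ i, d i ∘ₗ h i + h (i + 1) ∘ₗ d (i + 1) = f • LinearMap.id) :
    -- the even part `⊕ E^(2i)`, the odd part `⊕ E^(2i-1)`, and the two foldings of `d+h`
    let M₀ := DirectSum ℤ (fun i => E (2 * i))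
    let M₁ := DirectSum ℤ (fun i => E (2 * i - 1))
    let p₀ : M₀ →ₗ[B] M₁ :=
      DirectSum.toModule B ℤ M₁ (fun i =>
        ((DirectSum.lof B ℤ (fun j => E (2 * j - 1)) (i + 1)) ∘ₗ
            (lcast E (show (2 * i + 1 : ℤ) = 2 * (i + 1) - 1 by ring)).toLinearMap ∘ₗ
            d (2 * i)) +
        ((DirectSum.lof B ℤ (fun j => E (2 * j - 1)) i) ∘ₗ
            (h (2 * i - 1)) ∘ₗ
            (lcast E (show (2 * i : ℤ) = 2 * i - 1 + 1 by ring)).toLinearMap))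
    let p₁ : M₁ →ₗ[B] M₀ :=
      DirectSum.toModule B ℤ M₀ (fun i =>
        ((DirectSum.lof B ℤ (fun j => E (2 * j)) i) ∘ₗ
            (lcast E (show (2 * i - 1 + 1 : ℤ) = 2 * i by ring)).toLinearMap ∘ₗ
            d (2 * i - 1)) +
        ((DirectSum.lof B ℤ (fun j => E (2 * j)) (i - 1)) ∘ₗ
            (lcast E (show (2 * i - 2 : ℤ) = 2 * (i - 1) by ring)).toLinearMap ∘ₗ
            (h (2 * i - 2)) ∘ₗ
            (lcast E (show (2 * i - 1 : ℤ) = 2 * i - 2 + 1 by ring)).toLinearMap))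
    p₁ ∘ₗ p₀ = f • LinearMap.id ∧ p₀ ∘ₗ p₁ = f • LinearMap.id := by
  intro M₀ M₁ p₀ p₁
  constructor
  · refine DirectSum.linearMap_ext B fun i => ?_
    ext x
    simp only [p₀, p₁, LinearMap.comp_apply, DirectSum.toModule_lof, LinearMap.add_apply,
      map_add, LinearMap.smul_apply, LinearMap.id_apply, LinearEquiv.coe_coe]
    erw [DirectSum.toModule_lof, DirectSum.toModule_lof]
    simp only [LinearMap.comp_apply, LinearMap.add_apply, LinearEquiv.coe_coe]
    rw [dd_zero E d hd (show (2*i : ℤ) + 1 = 2*(i+1)-1 by ring)]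
    rw [quad_zero E h hh (show (2*i-1 : ℤ) = (2*i-2)+1 by ring)]
    rw [h_congr E h (show (2*i-1+1 : ℤ) = 2*(i+1)-2 by ring) (by ring) (by ring)]
    rw [d_congr E d (show (2*i-1+1 : ℤ) = 2*i by ring) (by ring) (by ring)]
    rw [lof_congr_even E (show i+1-1 = i by ring) (by ring)]
    simp only [lcast_lcast, lcast_rfl, map_zero, zero_add, add_zero]
    generalize hz : lcast (B := B) E (show (2*i : ℤ) = 2*i-1+1 by ring) x = z
    have hx : x = lcast (B := B) E (show (2*i-1+1 : ℤ) = 2*i by ring) z := by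
      rw [← hz, lcast_lcast, lcast_rfl]
    rw [hx, ← map_add, ← map_add, add_comm ((h (2*i-1+1)) ((d (2*i-1+1)) z))]
    have hsum := LinearMap.congr_fun (hdh (2*i-1)) z
    simp only [LinearMap.add_apply, LinearMap.comp_apply, LinearMap.smul_apply,
      LinearMap.id_apply] at hsum
    rw [hsum, map_smul, map_smul]
  · refine DirectSum.linearMap_ext B fun i => ?_
    ext x
    simp only [p₀, p₁, LinearMap.comp_apply, DirectSum.toModule_lof, LinearMap.add_apply,
      map_add, LinearMap.smul_apply, LinearMap.id_apply, LinearEquiv.coe_coe]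
    erw [DirectSum.toModule_lof, DirectSum.toModule_lof]
    simp only [LinearMap.comp_apply, LinearMap.add_apply, LinearEquiv.coe_coe]
    simp only [lcast_lcast, lcast_rfl]
    rw [dd_zero E d hd (show (2*i-1 : ℤ) + 1 = 2*i by ring)]
    rw [quad_zero E h hh (show (2*i-2 : ℤ) = (2*(i-1)-1)+1 by ring)]
    rw [h_congr E h (show (2*i-2+1 : ℤ) = 2*i-1 by ring) (by ring) (by ring)]
    rw [d_congr E d (show (2*i-2+1 : ℤ) = 2*i-1 by ring) (by ring) (by ring)]
    rw [d_congr E d (show (2*i-2 : ℤ) = 2*(i-1) by ring) (by ring) (by ring)]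
    rw [lof_congr_odd E (show i-1+1 = i by ring) (by ring)]
    simp only [lcast_lcast, lcast_rfl, map_zero, zero_add, add_zero]
    generalize hz : lcast (B := B) E (show (2*i-1 : ℤ) = 2*i-2+1 by ring) x = z
    have hx : x = lcast (B := B) E (show (2*i-2+1 : ℤ) = 2*i-1 by ring) z := by
      rw [← hz, lcast_lcast, lcast_rfl]
    rw [hx, ← map_add, ← map_add, add_comm ((h (2*i-2+1)) ((d (2*i-2+1)) z))]
    have hsum := LinearMap.congr_fun (hdh (2*i-2)) z
    simp only [LinearMap.add_apply, LinearMap.comp_apply, LinearMap.smul_apply,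
      LinearMap.id_apply] at hsum
    rw [hsum, map_smul, map_smul]
end
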